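/- Let V = V₁ ⊕ ⋯ ⊕ V_t be a direct sum of R-modules, for each j let m_j : V → V be a linear automorphism with m_j(v) - v ∈ V_j for all v, and let M = m_t ∘ ⋯ ∘ m₁. Then the kernel of (M - id) equals the set of vectors fixed by every m_j, i.e. {v ∈ V : M(v) = v} = {v ∈ V : m_j(v) = v for all j = 1,...,t}. -/
import Mathlib


def compUpTo {R : Type*} [CommRing R] {t : ℕ} {V : Fin t → Type*}
    [∀ i, AddCommGroup (V i)] [∀ i, Module R (V i)]
    (m : Fin t → ((∀ i, V i) ≃ₗ[R] (∀ i, V i))) : ℕ → ((∀ i, V i) ≃ₗ[R] (∀ i, V i))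
  | 0 => LinearEquiv.refl R _
  | k + 1 => if h : k < t then (compUpTo m k).trans (m ⟨k, h⟩) else compUpTo m k

lemma compUpTo_apply_of_le {R : Type*} [CommRing R] {t : ℕ} {V : Fin t → Type*}
    [∀ i, AddCommGroup (V i)] [∀ i, Module R (V i)]
    (m : Fin t → ((∀ i, V i) ≃ₗ[R] (∀ i, V i)))
    (hm : ∀ j : Fin t, ∀ v : ∀ i, V i, ∀ i, i ≠ j → (m j v - v) i = 0)
    (v : ∀ i, V i) : ∀ k, ∀ i : Fin t, k ≤ i.val → compUpTo m k v i = v i := by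
  intro k
  induction k with
  | zero => intro i _; rfl
  | succ k ih =>
    intro i hi
    by_cases h : k < t
    · have hne : i ≠ ⟨k, h⟩ := by
        intro he
        have hv : i.val = k := by rw [he]
        omega
      have h1 := hm ⟨k, h⟩ (compUpTo m k v) i hne
      have h2 : (m ⟨k, h⟩ (compUpTo m k v)) i = (compUpTo m k v) i := by
        rw [← sub_eq_zero]
        simpa using h1
      simp only [compUpTo, dif_pos h, LinearEquiv.trans_apply]
      rw [h2]
      exact ih i (by omega)
    · simp only [compUpTo, dif_neg h]
      exact ih i (by omega)

lemma compUpTo_step {R : Type*} [CommRing R] {t : ℕ} {V : Fin t → Type*}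
    [∀ i, AddCommGroup (V i)] [∀ i, Module R (V i)]
    (m : Fin t → ((∀ i, V i) ≃ₗ[R] (∀ i, V i)))
    (hm : ∀ j : Fin t, ∀ v : ∀ i, V i, ∀ i, i ≠ j → (m j v - v) i = 0)
    (v : ∀ i, V i) (k : ℕ) (h1 : compUpTo m (k + 1) v = v) :
    compUpTo m k v = v := by
  by_cases h : k < t
  · funext i
    by_cases hik : i = ⟨k, h⟩
    · subst hik
      exact compUpTo_apply_of_le m hm v k _ le_rfl
    · have h2 := hm ⟨k, h⟩ (compUpTo m k v) i hik
      have h3 : (m ⟨k, h⟩ (compUpTo m k v)) i = (compUpTo m k v) i := by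
        rw [← sub_eq_zero]
        simpa using h2
      have h4 : (m ⟨k, h⟩ (compUpTo m k v)) i = v i := by
        conv_rhs => rw [← h1]
        simp [compUpTo, dif_pos h]
      rw [← h3, h4]
  · conv_rhs => rw [← h1]
    simp [compUpTo, dif_neg h]

/-- The fixed vectors of M = m_t ∘ ⋯ ∘ m₁ are exactly the vectors fixed by every m_j. -/
theorem stmt5 {R : Type*} [CommRing R] {t : ℕ} {V : Fin t → Type*}
    [∀ i, AddCommGroup (V i)] [∀ i, Module R (V i)]
    (m : Fin t → ((∀ i, V i) ≃ₗ[R] (∀ i, V i)))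
    (hm : ∀ j : Fin t, ∀ v : ∀ i, V i, ∀ i, i ≠ j → (m j v - v) i = 0) :
    {v : ∀ i, V i | compUpTo m t v = v} = {v : ∀ i, V i | ∀ j : Fin t, m j v = v} := by
  ext v
  simp only [Set.mem_setOf_eq]
  constructor
  · intro hv
    -- first: compUpTo m k v = v for all k ≤ t, via downward steps
    have key : ∀ n k, k + n = t → compUpTo m k v = v := by
      intro n
      induction n with
      | zero => intro k hk; subst hk; simpa using hv
      | succ n ih =>
        intro k hk
        exact compUpTo_step m hm v k (ih (k + 1) (by omega))
    intro j
    have hj : compUpTo m j v = v := key (t - j) j (by omega)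
    have hj1 : compUpTo m (j + 1) v = v := key (t - (j + 1)) (j + 1) (by omega)
    have : compUpTo m (j + 1) v = m j (compUpTo m (j : ℕ) v) := by
      simp [compUpTo, dif_pos j.isLt]
    rw [this, hj] at hj1
    exact hj1
  · intro hv
    have : ∀ k, compUpTo m k v = v := by
      intro k
      induction k with
      | zero => rfl
      | succ k ih =>
        by_cases h : k < t
        · simp [compUpTo, dif_pos h, ih, hv ⟨k, h⟩]
        · simp [compUpTo, dif_neg h, ih]
    exact this t
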